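/- Let d ≥ 3. There exists no non-bipartite (d+1)-colored graph (Γ,γ) with ω_G(Γ) < ⌈d!/4⌉; equivalently, every non-bipartite (d+1)-colored graph satisfies ω_G(Γ) ≥ ⌈d!/4⌉ (where ⌈x⌉ denotes the least integer greater than or equal to x). -/

import Mathlib

/-!
Basic framework: edge-colored graphs à la crystallization theory.

A `(d+1)`-colored graph (finite connected multigraph, regular of degree `d+1`, with a proper
edge-coloring by the color set `C`, `#C = d+1`) is encoded by giving, for each color `c`,
the perfect matching formed by the `c`-colored edges, i.e. a fixed-point-free involution
`inv c` on the vertex set `V` (connectedness is the separate predicate `Conn`).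
-/

structure CGraph (C V : Type) where
  inv : C → V → V
  invol : ∀ c v, inv c (inv c v) = v
  no_fixed : ∀ c v, inv c v ≠ v

namespace CGraph

variable {C V : Type}

/-- `g G B` = number of connected components of the spanning subgraph `Γ_B` consisting of
the edges whose color lies in `B`. -/
noncomputable def g (G : CGraph C V) (B : Set C) : ℕ :=
  Nat.card (Quotient (Relation.EqvGen.setoid (fun v w : V => ∃ c ∈ B, G.inv c v = w)))

/-- connectedness of the colored graph -/
def Conn (G : CGraph C V) : Prop := G.g Set.univ = 1

/-- the spanning subgraph `Γ_B` of edges colored in `B`, as a colored graph with color set `B` -/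
def restrict (G : CGraph C V) (B : Set C) : CGraph B V where
  inv c v := G.inv c.val v
  invol c v := G.invol c.val v
  no_fixed c v := G.no_fixed c.val v

/-- reachability in the colored graph -/
def reach (G : CGraph C V) : V → V → Prop :=
  Relation.EqvGen (fun v w : V => ∃ c, G.inv c v = w)

/-- the connected component of `G` containing `v0`, as a colored graph on the vertices
reachable from `v0` -/
def component (G : CGraph C V) (v0 : V) : CGraph C {w : V // G.reach v0 w} where
  inv c w := ⟨G.inv c w.val,
    Relation.EqvGen.trans _ _ _ w.property (Relation.EqvGen.rel _ _ ⟨c, rfl⟩)⟩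
  invol c w := Subtype.ext (G.invol c w.val)
  no_fixed c w h := G.no_fixed c w.val (congrArg Subtype.val h)

/-- A cyclic permutation of the (finite) color set: a permutation consisting of a single cycle
through all the colors.  Cyclic permutations `ε = (ε_0, …, ε_d)` of the color set, up to
rotation, correspond bijectively to such permutations `σ` (via `σ : ε_j ↦ ε_{j+1}`), and
taking the inverse cyclic permutation corresponds to `σ ↦ σ⁻¹`. -/
def IsCyclicPerm (σ : Equiv.Perm C) : Prop := σ.IsCycle ∧ ∀ c, σ c ≠ c

/-- Euler characteristic `χ_σ(Γ) = Σ_{j} g_{ε_j ε_{j+1}} + (1-(n-1))·p` of the surface of the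
regular embedding associated with the cyclic permutation `σ`; here `n = #C`, the graph has
order `2p` (i.e. `p = (#V)/2`), and the consecutive pairs `{ε_j, ε_{j+1}}` are exactly the
pairs `{c, σ c}`, `c ∈ C`. -/
noncomputable def chi (G : CGraph C V) (σ : Equiv.Perm C) : ℚ :=
  (∑ᶠ c : C, (G.g {c, σ c} : ℚ)) +
    (2 - (Nat.card C : ℚ)) * ((Nat.card V : ℚ) / 2)

/-- the genus `ρ_σ` of the regular embedding associated with `σ`:
for a connected graph it is `(2 - χ_σ)/2`; in general (`g G Set.univ` connected components)
it is the sum of the genera of the connected components, matching the convention that the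
genus/G-degree of a disconnected colored graph is the sum over its connected components. -/
noncomputable def rho (G : CGraph C V) (σ : Equiv.Perm C) : ℚ :=
  (2 * (G.g Set.univ : ℚ) - G.chi σ) / 2

/-- the Gurau degree `ω_G(Γ) = Σ ρ_ε(Γ)`, the sum over the cyclic permutations of the color
set up to inverse; each class `{σ, σ⁻¹}` has `ρ_σ = ρ_{σ⁻¹}`, whence the division by `2`. -/
noncomputable def omegaG (G : CGraph C V) : ℚ :=
  (∑ᶠ σ : {σ : Equiv.Perm C // IsCyclicPerm σ}, G.rho σ.val) / 2

/-- bipartiteness -/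
def Bipartite (G : CGraph C V) : Prop := ∃ f : V → Bool, ∀ c v, f (G.inv c v) ≠ f v

/-- color-preserving isomorphism of colored graphs -/
def IsIso {V' : Type} (G : CGraph C V) (G' : CGraph C V') : Prop :=
  ∃ e : V ≃ V', ∀ c v, e (G.inv c v) = G'.inv c (e v)

end CGraph

set_option linter.unusedSectionVars false
set_option linter.unusedVariables false

open Relation

section NCL
variable {V : Type} [Finite V]

/-- number of classes of the equivalence relation generated by `r` -/
noncomputable def ncl {V : Type} (r : V → V → Prop) : ℕ :=
  Nat.card (Quotient (Relation.EqvGen.setoid r))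

lemma eqvGen_le {r s : V → V → Prop} (hs : Equivalence s)
    (h : ∀ a b, r a b → s a b) : ∀ a b, EqvGen r a b → s a b := by
  intro a b hab
  induction hab with
  | rel a b hab => exact h a b hab
  | refl a => exact hs.refl a
  | symm a b _ ih => exact hs.symm ih
  | trans a b c _ _ ih1 ih2 => exact hs.trans ih1 ih2

lemma eqvGen_mono' {r s : V → V → Prop}
    (h : ∀ a b, r a b → EqvGen s a b) : ∀ a b, EqvGen r a b → EqvGen s a b :=
  eqvGen_le (Relation.EqvGen.is_equivalence s) h

lemma ncl_congr {r s : V → V → Prop}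
    (h : ∀ a b, EqvGen r a b ↔ EqvGen s a b) : ncl r = ncl s := by
  exact Nat.card_congr (Quotient.congr (Equiv.refl V) (fun a b => h a b))

lemma ncl_le_of_le {r s : V → V → Prop}
    (h : ∀ a b, r a b → EqvGen s a b) : ncl s ≤ ncl r := by
  haveI : Finite (Quotient (Relation.EqvGen.setoid r)) := Quotient.finite _
  have hsurj : Function.Surjective
      (Quotient.map' id (fun a b hab => eqvGen_mono' h a b hab) :
        Quotient (Relation.EqvGen.setoid r) → Quotient (Relation.EqvGen.setoid s)) := by
    intro q
    induction q using Quotient.ind with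
    | _ v => exact ⟨Quotient.mk _ v, rfl⟩
  exact Nat.card_le_card_of_surjective _ hsurj

lemma ncl_le_card (r : V → V → Prop) : ncl r ≤ Nat.card V :=
  Nat.card_le_card_of_surjective (Quotient.mk _) (Quotient.mk''_surjective)

lemma ncl_eq_card_of_eq {r : V → V → Prop}
    (h : ∀ a b, r a b → a = b) : ncl r = Nat.card V := by
  refine Nat.card_congr (Equiv.symm ?_)
  have hid : ∀ a b, EqvGen r a b → a = b :=
    eqvGen_le ⟨fun _ => rfl, fun h => h.symm, fun h h' => h.trans h'⟩ h
  exact Equiv.ofBijective (Quotient.mk _)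
    ⟨fun a b hab => hid a b (Quotient.exact hab), Quotient.mk''_surjective⟩

/-- the one-directed "edge" relation -/
def erel {V : Type} (x y : V) : V → V → Prop := fun a b => a = x ∧ b = y

/-- union of relations -/
def rsup {V : Type} (r s : V → V → Prop) : V → V → Prop := fun a b => r a b ∨ s a b

lemma eqvGen_rsup_edge_iff {s : V → V → Prop} {x y : V} {a b : V} :
    EqvGen (rsup s (erel x y)) a b ↔
      (EqvGen s a b ∨ (EqvGen s a x ∧ EqvGen s b y) ∨ (EqvGen s a y ∧ EqvGen s b x)) := by
  have E := Relation.EqvGen.is_equivalence s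
  constructor
  · intro h
    induction h with
    | rel a b hab =>
      rcases hab with hab | ⟨rfl, rfl⟩
      · exact Or.inl (EqvGen.rel _ _ hab)
      · exact Or.inr (Or.inl ⟨E.refl _, E.refl _⟩)
    | refl a => exact Or.inl (E.refl a)
    | symm a b _ ih =>
      rcases ih with h | ⟨h1, h2⟩ | ⟨h1, h2⟩
      · exact Or.inl (E.symm h)
      · exact Or.inr (Or.inr ⟨h2, h1⟩)
      · exact Or.inr (Or.inl ⟨h2, h1⟩)
    | trans a b c _ _ ih1 ih2 =>
      rcases ih1 with h | ⟨h1, h2⟩ | ⟨h1, h2⟩ <;>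
        rcases ih2 with g | ⟨g1, g2⟩ | ⟨g1, g2⟩
      · exact Or.inl (E.trans h g)
      · exact Or.inr (Or.inl ⟨E.trans h g1, g2⟩)
      · exact Or.inr (Or.inr ⟨E.trans h g1, g2⟩)
      · exact Or.inr (Or.inl ⟨h1, E.trans (E.symm g) h2⟩)
      · exact Or.inl (E.trans (E.trans (E.trans h1 (E.symm g1)) h2) (E.symm g2))
      · exact Or.inl (E.trans h1 (E.symm g2))
      · exact Or.inr (Or.inr ⟨h1, E.trans (E.symm g) h2⟩)
      · exact Or.inl (E.trans h1 (E.symm g2))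
      · exact Or.inl (E.trans h1 (E.trans (E.symm g1) (E.trans h2 (E.symm g2))))
  · intro h
    have hx : EqvGen (rsup s (erel x y)) x y := EqvGen.rel _ _ (Or.inr ⟨rfl, rfl⟩)
    have lift : ∀ a b, EqvGen s a b → EqvGen (rsup s (erel x y)) a b :=
      eqvGen_mono' (fun a b hab => EqvGen.rel _ _ (Or.inl hab))
    have E' := Relation.EqvGen.is_equivalence (rsup s (erel x y))
    rcases h with h | ⟨h1, h2⟩ | ⟨h1, h2⟩
    · exact lift _ _ h
    · exact E'.trans (lift _ _ h1) (E'.trans hx (E'.symm (lift _ _ h2)))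
    · exact E'.trans (lift _ _ h1) (E'.trans (E'.symm hx) (E'.symm (lift _ _ h2)))

lemma ncl_rsup_edge_le {s : V → V → Prop} {x y : V} :
    ncl (rsup s (erel x y)) ≤ ncl s :=
  ncl_le_of_le (fun a b hab => EqvGen.rel _ _ (Or.inl hab))

instance finite_option (α : Type) [Finite α] : Finite (Option α) :=
  Finite.of_equiv _ (Equiv.optionEquivSumPUnit α : Option α ≃ α ⊕ PUnit.{1}).symm

lemma nat_card_option (α : Type) [Finite α] : Nat.card (Option α) = Nat.card α + 1 := by
  rw [Nat.card_congr ((Equiv.optionEquivSumPUnit α : Option α ≃ α ⊕ PUnit.{1})), Nat.card_sum]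
  simp

lemma ncl_le_ncl_rsup_edge_add_one {s : V → V → Prop} {x y : V} :
    ncl s ≤ ncl (rsup s (erel x y)) + 1 := by
  classical
  set t := rsup s (erel x y) with ht
  haveI : Finite (Quotient (Relation.EqvGen.setoid t)) := Quotient.finite _
  have key : Function.Injective (fun q : Quotient (Relation.EqvGen.setoid s) =>
      (Quotient.liftOn q (fun v => if EqvGen s x v then (none : Option (Quotient (Relation.EqvGen.setoid t)))
        else some (Quotient.mk _ v))
        (by
          intro a b hab
          by_cases hxa : EqvGen s x a
          · have hxb : EqvGen s x b := (Relation.EqvGen.is_equivalence s).trans hxa hab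
            simp [hxa, hxb]
          · have hxb : ¬ EqvGen s x b := fun hxb => hxa
              ((Relation.EqvGen.is_equivalence s).trans hxb ((Relation.EqvGen.is_equivalence s).symm hab))
            simp only [hxa, hxb, if_false]
            exact congrArg some (Quotient.sound (eqvGen_mono'
              (fun a b hab => EqvGen.rel a b (Or.inl hab)) a b hab)))) ) := by
    intro q1 q2
    induction q1 using Quotient.ind with
    | _ a =>
    induction q2 using Quotient.ind with
    | _ b =>
    intro h
    simp only [Quotient.liftOn_mk] at h
    have E := Relation.EqvGen.is_equivalence s
    by_cases hxa : EqvGen s x a <;> by_cases hxb : EqvGen s x b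
    · exact Quotient.sound (E.trans (E.symm hxa) hxb)
    · simp [hxa, hxb] at h
    · simp [hxa, hxb] at h
    · simp only [hxa, hxb, if_false, Option.some.injEq] at h
      have htab : EqvGen t a b := Quotient.exact h
      rw [ht] at htab
      rcases eqvGen_rsup_edge_iff.mp htab with h' | ⟨h1, h2⟩ | ⟨h1, h2⟩
      · exact Quotient.sound h'
      · exact absurd (E.symm h1) hxa
      · exact absurd (E.symm h2) hxb
  calc ncl s ≤ Nat.card (Option (Quotient (Relation.EqvGen.setoid t))) :=
        Nat.card_le_card_of_injective _ key
    _ = ncl t + 1 := nat_card_option _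

lemma ncl_rsup_edge_add_one_le {s : V → V → Prop} {x y : V}
    (hne : ¬ EqvGen s x y) : ncl (rsup s (erel x y)) + 1 ≤ ncl s := by
  classical
  set t := rsup s (erel x y) with ht
  haveI : Finite (Quotient (Relation.EqvGen.setoid t)) := Quotient.finite _
  have E := Relation.EqvGen.is_equivalence s
  have Et := Relation.EqvGen.is_equivalence t
  have key : Function.Injective (fun o : Option (Quotient (Relation.EqvGen.setoid t)) =>
      (match o with
       | none => (Quotient.mk _ y : Quotient (Relation.EqvGen.setoid s))
       | some q => if EqvGen s q.out y then Quotient.mk _ x else Quotient.mk _ q.out)) := by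
    have edge : EqvGen t x y := EqvGen.rel _ _ (Or.inr ⟨rfl, rfl⟩)
    have liftt : ∀ a b, EqvGen s a b → EqvGen t a b :=
      eqvGen_mono' (fun a b hab => EqvGen.rel _ _ (Or.inl hab))
    have outeq : ∀ q : Quotient (Relation.EqvGen.setoid t),
        Quotient.mk (Relation.EqvGen.setoid t) q.out = q := fun q => Quotient.out_eq q
    intro o1 o2 h
    match o1, o2 with
    | none, none => rfl
    | none, some q =>
      simp only at h
      by_cases hq : EqvGen s q.out y <;> simp only [hq, if_true, if_false] at h
      · exact absurd (Quotient.exact h) (fun hyx => hne (E.symm hyx))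
      · exact absurd (E.symm (Quotient.exact h)) hq
    | some q, none =>
      simp only at h
      by_cases hq : EqvGen s q.out y <;> simp only [hq, if_true, if_false] at h
      · exact absurd (Quotient.exact h) hne
      · exact absurd (Quotient.exact h) hq
    | some q1, some q2 =>
      simp only at h
      by_cases h1 : EqvGen s q1.out y <;> by_cases h2 : EqvGen s q2.out y <;>
        simp only [h1, h2, if_true, if_false] at h
      · have hteq : EqvGen t q1.out q2.out := Et.trans (liftt _ _ h1) (Et.symm (liftt _ _ h2))
        have h2' : Quotient.mk (Relation.EqvGen.setoid t) q1.out = Quotient.mk _ q2.out :=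
          Quotient.sound hteq
        rw [outeq, outeq] at h2'
        exact congrArg some h2'
      · have hs : EqvGen s x q2.out := Quotient.exact h
        have hteq : EqvGen t q1.out q2.out :=
          Et.trans (liftt _ _ h1) (Et.trans (Et.symm edge) (liftt _ _ hs))
        have h2' : Quotient.mk (Relation.EqvGen.setoid t) q1.out = Quotient.mk _ q2.out :=
          Quotient.sound hteq
        rw [outeq, outeq] at h2'
        exact congrArg some h2'
      · have hs : EqvGen s q1.out x := Quotient.exact h
        have hteq : EqvGen t q1.out q2.out :=
          Et.trans (liftt _ _ hs) (Et.trans edge (Et.symm (liftt _ _ h2)))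
        have h2' : Quotient.mk (Relation.EqvGen.setoid t) q1.out = Quotient.mk _ q2.out :=
          Quotient.sound hteq
        rw [outeq, outeq] at h2'
        exact congrArg some h2'
      · have hs : EqvGen s q1.out q2.out := Quotient.exact h
        have h2' : Quotient.mk (Relation.EqvGen.setoid t) q1.out = Quotient.mk _ q2.out :=
          Quotient.sound (liftt _ _ hs)
        rw [outeq, outeq] at h2'
        exact congrArg some h2'
  calc ncl t + 1 = Nat.card (Option (Quotient (Relation.EqvGen.setoid t))) := (nat_card_option _).symm
    _ ≤ ncl s := Nat.card_le_card_of_injective _ key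

end NCL

section PERM
variable {V : Type} [Finite V] [DecidableEq V]

open Equiv Relation

/-- the relation "moved by the permutation" -/
def prel {V : Type} (π : Equiv.Perm V) : V → V → Prop := fun a b => π a = b

/-- the relation "moved by one of the permutations in the list" -/
def lrel {V : Type} (l : List (Equiv.Perm V)) : V → V → Prop := fun a b => ∃ π ∈ l, π a = b

/-- number of cycles (orbits, incl. fixed points) of a permutation -/
noncomputable def cyc {V : Type} (π : Equiv.Perm V) : ℕ := ncl (prel π)

lemma cyc_one : cyc (1 : Equiv.Perm V) = Nat.card V :=
  ncl_eq_card_of_eq (fun _ _ h => h)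

lemma ncl_lrel_nil : ncl (lrel ([] : List (Equiv.Perm V))) = Nat.card V :=
  ncl_eq_card_of_eq (fun a b h => by rcases h with ⟨π, hπ, _⟩; exact absurd hπ List.not_mem_nil)

lemma eqvGen_prel_pow {π : Equiv.Perm V} (n : ℕ) (a : V) : EqvGen (prel π) a ((π ^ n) a) := by
  induction n with
  | zero => exact EqvGen.refl a
  | succ k ih =>
    have : (π ^ (k+1)) a = π ((π ^ k) a) := by rw [pow_succ']; rfl
    rw [this]
    exact EqvGen.trans _ _ _ ih (EqvGen.rel _ _ rfl)

lemma eqvGen_prel_iff_zpow {π : Equiv.Perm V} {a b : V} :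
    EqvGen (prel π) a b ↔ ∃ k : ℤ, (π ^ k) a = b := by
  constructor
  · intro h
    induction h with
    | rel a b hab => exact ⟨1, by simpa [prel] using hab⟩
    | refl a => exact ⟨0, rfl⟩
    | symm a b _ ih =>
      obtain ⟨k, hk⟩ := ih
      exact ⟨-k, by rw [← hk]; simp [← Equiv.Perm.mul_apply, ← zpow_add]⟩
    | trans a b c _ _ ih1 ih2 =>
      obtain ⟨k, hk⟩ := ih1; obtain ⟨m, hm⟩ := ih2
      exact ⟨m + k, by rw [← hm, ← hk]; simp [← Equiv.Perm.mul_apply, ← zpow_add]⟩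
  · rintro ⟨k, rfl⟩
    rcases le_or_gt 0 k with hk | hk
    · obtain ⟨n, rfl⟩ := Int.eq_ofNat_of_zero_le hk
      rw [zpow_natCast]; exact eqvGen_prel_pow n a
    · have h2 : (π ^ (-k).toNat) ((π ^ k) a) = a := by
        rw [← Equiv.Perm.mul_apply, ← zpow_natCast, Int.toNat_of_nonneg (by omega), ← zpow_add]
        simp
      have := eqvGen_prel_pow (π := π) (-k).toNat ((π ^ k) a)
      rw [h2] at this
      exact EqvGen.symm _ _ this

lemma ncl_rsup_edge_of_rel {s : V → V → Prop} {x y : V} (hxy : EqvGen s x y) :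
    ncl (rsup s (erel x y)) = ncl s := by
  refine ncl_congr (fun a b => ⟨fun h => ?_, fun h => eqvGen_mono' (fun a b hab => EqvGen.rel _ _ (Or.inl hab)) a b h⟩)
  refine eqvGen_le (Relation.EqvGen.is_equivalence s) ?_ a b h
  rintro a b (hab | ⟨rfl, rfl⟩)
  · exact EqvGen.rel _ _ hab
  · exact hxy

/-- moves of `swap x y * σ` stay within the equivalence generated by `σ`-moves plus the
edge `{x,y}` -/
lemma swap_mul_gen {x y : V} {σ : Equiv.Perm V} :
    ∀ a b, prel (Equiv.swap x y * σ) a b → EqvGen (rsup (prel σ) (erel x y)) a b := by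
  intro a b hab
  have h1 : EqvGen (rsup (prel σ) (erel x y)) a (σ a) := EqvGen.rel _ _ (Or.inl rfl)
  have hedge : EqvGen (rsup (prel σ) (erel x y)) x y := EqvGen.rel _ _ (Or.inr ⟨rfl, rfl⟩)
  have hb : b = Equiv.swap x y (σ a) := hab.symm
  by_cases hx : σ a = x
  · have hby : b = y := by rw [hb, hx, Equiv.swap_apply_left]
    rw [hby]
    exact EqvGen.trans _ _ _ (hx ▸ h1) hedge
  · by_cases hy : σ a = y
    · have hbx : b = x := by rw [hb, hy, Equiv.swap_apply_right]
      rw [hbx]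
      exact EqvGen.trans _ _ _ (hy ▸ h1) (EqvGen.symm _ _ hedge)
    · have hba : b = σ a := by rw [hb, Equiv.swap_apply_of_ne_of_ne hx hy]
      rw [hba]
      exact h1

lemma eqvGen_swap_mul_edge {x y : V} {σ : Equiv.Perm V} (a b : V) :
    EqvGen (rsup (prel (Equiv.swap x y * σ)) (erel x y)) a b ↔
      EqvGen (rsup (prel σ) (erel x y)) a b := by
  constructor
  · refine eqvGen_mono' ?_ a b
    rintro a b (hab | hab)
    · exact swap_mul_gen a b hab
    · exact EqvGen.rel _ _ (Or.inr hab)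
  · refine eqvGen_mono' ?_ a b
    rintro a b (hab | hab)
    · have : prel (Equiv.swap x y * (Equiv.swap x y * σ)) a b := by
        rwa [Equiv.swap_mul_self_mul]
      exact swap_mul_gen a b this
    · exact EqvGen.rel _ _ (Or.inr hab)

/-- (A): multiplying by a transposition changes the number of cycles by at most one (up) -/
lemma cyc_swap_mul_le (x y : V) (σ : Equiv.Perm V) :
    cyc (Equiv.swap x y * σ) ≤ cyc σ + 1 := by
  calc cyc (Equiv.swap x y * σ)
      ≤ ncl (rsup (prel (Equiv.swap x y * σ)) (erel x y)) + 1 := ncl_le_ncl_rsup_edge_add_one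
    _ = ncl (rsup (prel σ) (erel x y)) + 1 := by rw [ncl_congr eqvGen_swap_mul_edge]
    _ ≤ cyc σ + 1 := by exact Nat.add_le_add_right ncl_rsup_edge_le 1

/-- (B'): if `x,y` are in different cycles of `σ`, then `swap x y * σ` has strictly
fewer cycles. -/
lemma cyc_swap_mul_add_one_le {x y : V} (hxy : x ≠ y) {σ : Equiv.Perm V}
    (h : ¬ EqvGen (prel σ) x y) : cyc (Equiv.swap x y * σ) + 1 ≤ cyc σ := by
  -- step 1 : x and y are in the same cycle of (swap x y) * σ
  have hstep : EqvGen (prel (Equiv.swap x y * σ)) x y := by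
    have hex : ∃ k, 0 < k ∧ (σ ^ k) x = x := by
      refine ⟨orderOf σ, orderOf_pos σ, by rw [pow_orderOf_eq_one]; rfl⟩
    classical
    obtain ⟨n, ⟨hnpos, hnfix⟩, hmin⟩ :
        ∃ n, (0 < n ∧ (σ ^ n) x = x) ∧ ∀ m, m < n → ¬(0 < m ∧ (σ ^ m) x = x) :=
      ⟨Nat.find hex, Nat.find_spec hex, fun m hm => Nat.find_min hex hm⟩
    have claim : ∀ k, k < n → ((Equiv.swap x y * σ) ^ k) x = (σ ^ k) x := by
      intro k
      induction k with
      | zero => intro _; rfl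
      | succ m ih =>
        intro hlt
        have h1 : ((Equiv.swap x y * σ) ^ (m+1)) x
            = (Equiv.swap x y * σ) (((Equiv.swap x y * σ) ^ m) x) := by rw [pow_succ']; rfl
        have h2 : (σ ^ (m+1)) x = σ ((σ ^ m) x) := by rw [pow_succ']; rfl
        rw [h1, ih (by omega), h2]
        have hne1 : σ ((σ ^ m) x) ≠ x := by
          intro hfix
          have : (σ ^ (m+1)) x = x := by rw [h2, hfix]
          exact hmin (m+1) hlt ⟨by omega, this⟩
        have hne2 : σ ((σ ^ m) x) ≠ y := by
          intro hfix
          refine h ?_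
          have : (σ ^ (m+1)) x = y := by rw [h2, hfix]
          rw [← this]
          exact eqvGen_prel_pow (m+1) x
        show Equiv.swap x y (σ ((σ ^ m) x)) = _
        rw [Equiv.swap_apply_of_ne_of_ne hne1 hne2]
    have hfin : ((Equiv.swap x y * σ) ^ n) x = y := by
      obtain ⟨m, rfl⟩ : ∃ m, n = m + 1 := ⟨n - 1, by omega⟩
      have h1 : ((Equiv.swap x y * σ) ^ (m+1)) x
          = (Equiv.swap x y * σ) (((Equiv.swap x y * σ) ^ m) x) := by rw [pow_succ']; rfl
      have h2 : (σ ^ (m+1)) x = σ ((σ ^ m) x) := by rw [pow_succ']; rfl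
      rw [h1, claim m (by omega)]
      show Equiv.swap x y (σ ((σ ^ m) x)) = y
      rw [← h2, hnfix]
      exact Equiv.swap_apply_left x y
    have hpow := eqvGen_prel_pow (π := Equiv.swap x y * σ) n x
    rwa [hfin] at hpow
  -- step 2 : counting
  have e1 : cyc (Equiv.swap x y * σ) = ncl (rsup (prel (Equiv.swap x y * σ)) (erel x y)) :=
    (ncl_rsup_edge_of_rel hstep).symm
  have e2 : ncl (rsup (prel (Equiv.swap x y * σ)) (erel x y)) = ncl (rsup (prel σ) (erel x y)) :=
    ncl_congr eqvGen_swap_mul_edge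
  rw [show cyc (Equiv.swap x y * σ) = ncl (rsup (prel σ) (erel x y)) from e1.trans e2]
  exact ncl_rsup_edge_add_one_le h

lemma eqvGen_fixed {π : Equiv.Perm V} {x : V} (hx : π x = x) {b : V}
    (h : EqvGen (prel π) x b) : x = b := by
  have key : ∀ a b, EqvGen (prel π) a b → (a = x ↔ b = x) := by
    refine eqvGen_le ⟨fun _ => Iff.rfl, fun h => h.symm, fun h h' => h.trans h'⟩ ?_
    rintro a b rfl
    constructor
    · rintro rfl; exact hx
    · intro hb
      have : π a = π x := by rw [hx, hb]
      exact π.injective this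
  exact ((key x b h).mp rfl).symm

lemma prel_prod_sub_lrel : ∀ (l : List (Equiv.Perm V)) (a : V), EqvGen (lrel l) a (l.prod a) := by
  intro l
  induction l with
  | nil => intro a; exact EqvGen.refl a
  | cons t l' ih =>
    intro a
    have h1 : (t :: l').prod a = t (l'.prod a) := by rw [List.prod_cons]; rfl
    rw [h1]
    have h2 : EqvGen (lrel (t :: l')) a (l'.prod a) := by
      refine eqvGen_mono' ?_ _ _ (ih a)
      rintro a b ⟨π, hπ, hab⟩
      exact EqvGen.rel _ _ ⟨π, List.mem_cons_of_mem _ hπ, hab⟩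
    exact EqvGen.trans _ _ _ h2 (EqvGen.rel _ _ ⟨t, List.mem_cons_self, rfl⟩)

/-- factorization into transpositions, with control on length and on connectivity -/
lemma exists_swap_factorization (σ : Equiv.Perm V) :
    ∃ l : List (Equiv.Perm V), (∀ τ ∈ l, ∃ x y, x ≠ y ∧ τ = Equiv.swap x y) ∧ l.prod = σ ∧
      l.length + cyc σ ≤ Nat.card V ∧
      (∀ a b, EqvGen (lrel l) a b ↔ EqvGen (prel σ) a b) := by
  generalize hk : Nat.card V - cyc σ = k
  induction k using Nat.strong_induction_on generalizing σ with
  | _ k IH =>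
  by_cases h1 : σ = 1
  · subst h1
    refine ⟨[], by simp, by simp, by simp [cyc_one], fun a b => ⟨?_, ?_⟩⟩
    · intro h
      have : a = b := by
        refine eqvGen_le ⟨fun _ => rfl, fun h => h.symm, fun h h' => h.trans h'⟩ ?_ a b h
        rintro a b ⟨π, hπ, _⟩
        exact absurd hπ List.not_mem_nil
      exact this ▸ EqvGen.refl a
    · intro h
      have : a = b := by
        refine eqvGen_le ⟨fun _ => rfl, fun h => h.symm, fun h h' => h.trans h'⟩ ?_ a b h
        rintro a b hab; exact hab
      exact this ▸ EqvGen.refl a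
  · have hex : ∃ x, σ x ≠ x := by
      by_contra hc
      push_neg at hc
      exact h1 (Equiv.ext fun x => (hc x).trans rfl)
    obtain ⟨x, hx⟩ := hex
    set y := σ x with hy
    have hxy : x ≠ y := fun h => hx h.symm
    set t := Equiv.swap x y with ht
    set β := t * σ with hβ
    have hβx : β x = x := by
      show t (σ x) = x
      rw [← hy, Equiv.swap_apply_right]
    have hnotrel : ¬ EqvGen (prel β) x y := fun h => hxy (eqvGen_fixed hβx h)
    have htβ : t * β = σ := by rw [hβ, ht, Equiv.swap_mul_self_mul]
    have hcycσ : cyc σ + 1 ≤ cyc β := by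
      have := cyc_swap_mul_add_one_le hxy hnotrel
      rwa [htβ] at this
    have hcycβ : cyc β ≤ Nat.card V := ncl_le_card _
    have hcycσ' : cyc σ < Nat.card V := by omega
    obtain ⟨l', hsw', hprod', hlen', hrel'⟩ :=
      IH (Nat.card V - cyc β) (by omega) β rfl
    refine ⟨t :: l', ?_, ?_, ?_, ?_⟩
    · rintro τ hτ
      rcases List.mem_cons.mp hτ with rfl | hτ
      · exact ⟨x, y, hxy, rfl⟩
      · exact hsw' τ hτ
    · rw [List.prod_cons, hprod', htβ]
    · simp only [List.length_cons]
      omega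
    · -- relation identification
      have hβsub : ∀ a b, prel β a b → EqvGen (prel σ) a b := by
        rintro a b rfl
        have h1 : EqvGen (prel σ) a (σ a) := EqvGen.rel _ _ rfl
        have hedge : EqvGen (prel σ) x y := EqvGen.rel _ _ rfl
        show EqvGen (prel σ) a (t (σ a))
        by_cases hx1 : σ a = x
        · rw [hx1, Equiv.swap_apply_left]
          exact EqvGen.trans _ _ _ (hx1 ▸ h1) hedge
        · by_cases hy1 : σ a = y
          · rw [hy1, Equiv.swap_apply_right]
            exact EqvGen.trans _ _ _ (hy1 ▸ h1) (EqvGen.symm _ _ hedge)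
          · rw [Equiv.swap_apply_of_ne_of_ne hx1 hy1]
            exact h1
      intro a b
      constructor
      · refine eqvGen_mono' ?_ a b
        rintro a b ⟨π, hπ, hab⟩
        rcases List.mem_cons.mp hπ with rfl | hπ
        · -- π = t
          subst hab
          by_cases hx1 : a = x
          · subst hx1
            rw [Equiv.swap_apply_left]
            exact EqvGen.rel _ _ rfl
          · by_cases hy1 : a = y
            · subst hy1
              rw [Equiv.swap_apply_right]
              exact EqvGen.symm _ _ (EqvGen.rel _ _ rfl)
            · rw [Equiv.swap_apply_of_ne_of_ne hx1 hy1]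
              exact EqvGen.refl a
        · have : EqvGen (prel β) a b := (hrel' a b).mp (EqvGen.rel _ _ ⟨π, hπ, hab⟩)
          exact eqvGen_mono' hβsub a b this
      · refine eqvGen_mono' ?_ a b
        rintro a b rfl
        have h1 : EqvGen (prel β) a (β a) := EqvGen.rel _ _ rfl
        have h2 : EqvGen (lrel (t :: l')) a (β a) := by
          refine eqvGen_mono' ?_ _ _ ((hrel' a (β a)).mpr h1)
          rintro a b ⟨π, hπ, hab⟩
          exact EqvGen.rel _ _ ⟨π, List.mem_cons_of_mem _ hπ, hab⟩
        have h3 : EqvGen (lrel (t :: l')) (β a) (t (β a)) :=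
          EqvGen.rel _ _ ⟨t, List.mem_cons_self, rfl⟩
        have : σ a = t (β a) := by rw [← htβ]; rfl
        rw [this]
        exact EqvGen.trans _ _ _ h2 h3

/-- the key inequality T' for lists of transpositions -/
lemma Tprime : ∀ (l : List (Equiv.Perm V)),
    (∀ τ ∈ l, ∃ x y, x ≠ y ∧ τ = Equiv.swap x y) →
    cyc l.prod + 2 * Nat.card V ≤ l.length + Nat.card V + 2 * ncl (lrel l) := by
  intro l
  induction l with
  | nil =>
    intro _
    simp only [List.prod_nil, List.length_nil, cyc_one, ncl_lrel_nil]
    omega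
  | cons t l' ih =>
    intro hsw
    obtain ⟨x, y, hxy, ht⟩ := hsw t (List.mem_cons_self)
    have ih' := ih (fun τ hτ => hsw τ (List.mem_cons_of_mem _ hτ))
    rw [ht]
    clear hsw ih ht
    set π' := l'.prod with hπ'
    have hprod : (Equiv.swap x y :: l').prod = Equiv.swap x y * π' := List.prod_cons
    -- relation of cons list = relation of l' plus edge
    have hiff : ∀ a b, EqvGen (lrel (Equiv.swap x y :: l')) a b ↔
        EqvGen (rsup (lrel l') (erel x y)) a b := by
      intro a b
      constructor
      · refine eqvGen_mono' ?_ a b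
        rintro a b ⟨π, hπ, hab⟩
        rcases List.mem_cons.mp hπ with rfl | hπ
        · subst hab
          by_cases hx1 : a = x
          · subst hx1; rw [Equiv.swap_apply_left]
            exact EqvGen.rel _ _ (Or.inr ⟨rfl, rfl⟩)
          · by_cases hy1 : a = y
            · subst hy1; rw [Equiv.swap_apply_right]
              exact EqvGen.symm _ _ (EqvGen.rel _ _ (Or.inr ⟨rfl, rfl⟩))
            · rw [Equiv.swap_apply_of_ne_of_ne hx1 hy1]
              exact EqvGen.refl a
        · exact EqvGen.rel _ _ (Or.inl ⟨π, hπ, hab⟩)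
      · refine eqvGen_mono' ?_ a b
        rintro a b (⟨π, hπ, hab⟩ | ⟨ha, hb2⟩)
        · exact EqvGen.rel _ _ ⟨π, List.mem_cons_of_mem _ hπ, hab⟩
        · refine EqvGen.rel _ _ ⟨Equiv.swap x y, List.mem_cons_self, ?_⟩
          rw [ha, hb2]
          exact Equiv.swap_apply_left x y
    have hncl_cons : ncl (lrel (Equiv.swap x y :: l')) = ncl (rsup (lrel l') (erel x y)) :=
      ncl_congr hiff
    by_cases hxyrel : EqvGen (prel π') x y
    · -- same cycle
      have hA : cyc ((Equiv.swap x y :: l').prod) ≤ cyc π' + 1 := by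
        rw [hprod]; exact cyc_swap_mul_le x y π'
      have hxyl : EqvGen (lrel l') x y := by
        refine eqvGen_mono' ?_ x y hxyrel
        rintro a b rfl
        exact prel_prod_sub_lrel l' a
      have hncl : ncl (rsup (lrel l') (erel x y)) = ncl (lrel l') :=
        ncl_rsup_edge_of_rel hxyl
      rw [hncl_cons, hncl]
      simp only [List.length_cons]
      omega
    · -- different cycles
      have hB : cyc ((Equiv.swap x y :: l').prod) + 1 ≤ cyc π' := by
        rw [hprod]; exact cyc_swap_mul_add_one_le hxy hxyrel
      have hncl : ncl (lrel l') ≤ ncl (rsup (lrel l') (erel x y)) + 1 :=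
        ncl_le_ncl_rsup_edge_add_one
      rw [hncl_cons]
      simp only [List.length_cons]
      omega

/-- the key inequality: permutations whose product is the identity -/
lemma main_perm (L : List (Equiv.Perm V)) (h : L.prod = 1) :
    (L.map cyc).sum + 2 * Nat.card V ≤ L.length * Nat.card V + 2 * ncl (lrel L) := by
  classical
  choose f hsw hprod hlen hrel using exists_swap_factorization (V := V)
  set F := (L.map f).flatten with hF
  have hFsw : ∀ τ ∈ F, ∃ x y, x ≠ y ∧ τ = Equiv.swap x y := by
    intro τ hτ
    rw [hF] at hτ
    obtain ⟨l, hl, hτl⟩ := List.mem_flatten.mp hτ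
    obtain ⟨π, hπ, rfl⟩ := List.mem_map.mp hl
    exact hsw π τ hτl
  have hFprod : F.prod = 1 := by
    rw [hF, List.prod_flatten, List.map_map]
    have : (List.prod ∘ f) = id := funext fun π => hprod π
    rw [this, List.map_id, h]
  have hFlen : F.length = (L.map (fun π => (f π).length)).sum := by
    rw [hF, List.length_flatten, List.map_map]
    rfl
  have hFrel : ∀ a b, EqvGen (lrel F) a b ↔ EqvGen (lrel L) a b := by
    intro a b
    constructor
    · refine eqvGen_mono' ?_ a b
      rintro a b ⟨τ, hτ, hab⟩
      rw [hF] at hτ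
      obtain ⟨l, hl, hτl⟩ := List.mem_flatten.mp hτ
      obtain ⟨π, hπ, rfl⟩ := List.mem_map.mp hl
      have h1 : EqvGen (lrel (f π)) a b := EqvGen.rel _ _ ⟨τ, hτl, hab⟩
      have h2 : EqvGen (prel π) a b := (hrel π a b).mp h1
      refine eqvGen_mono' ?_ a b h2
      rintro a b rfl
      exact EqvGen.rel _ _ ⟨π, hπ, rfl⟩
    · refine eqvGen_mono' ?_ a b
      rintro a b ⟨π, hπ, hab⟩
      have h1 : EqvGen (prel π) a b := EqvGen.rel _ _ hab
      have h2 : EqvGen (lrel (f π)) a b := (hrel π a b).mpr h1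
      refine eqvGen_mono' ?_ a b h2
      rintro a b ⟨τ, hτ, hab⟩
      refine EqvGen.rel _ _ ⟨τ, ?_, hab⟩
      rw [hF]
      exact List.mem_flatten.mpr ⟨f π, List.mem_map.mpr ⟨π, hπ, rfl⟩, hτ⟩
  have hT := Tprime F hFsw
  rw [hFprod, cyc_one, ncl_congr hFrel, hFlen] at hT
  -- pointwise : (f π).length + cyc π ≤ card
  have hsum : (L.map (fun π => (f π).length)).sum + (L.map cyc).sum ≤ L.length * Nat.card V := by
    have e1 : (L.map (fun π => (f π).length)).sum + (L.map cyc).sum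
        = (L.map (fun π => (f π).length + cyc π)).sum := by
      induction L with
      | nil => simp
      | cons a l ihl => simp [List.map_cons, List.sum_cons]; omega
    rw [e1]
    have e2 : ∀ π ∈ L, (f π).length + cyc π ≤ Nat.card V := fun π _ => hlen π
    calc (L.map (fun π => (f π).length + cyc π)).sum
        ≤ (L.map (fun _ => Nat.card V)).sum := by
          apply List.sum_le_sum
          intro π hπ
          exact e2 π hπ
      _ = L.length * Nat.card V := by
          induction L with
          | nil => simp
          | cons a l ihl => simp [List.map_cons, List.sum_cons, ihl, Nat.succ_mul]; omega
  omega

end PERM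

section GRAPH

open Relation Equiv CGraph

variable {V : Type} [Finite V] [DecidableEq V]

/-- counting lemma : if every class of the (coarser) relation `s` contains at least the two
`r`-inequivalent points `v`, `b v`, then `r` has at least twice as many classes as `s`. -/
lemma two_ncl_le {r s : V → V → Prop} (b : V → V)
    (h1 : ∀ a c, r a c → EqvGen s a c)
    (h2 : ∀ v, EqvGen s v (b v))
    (h3 : ∀ v, ¬ EqvGen r v (b v)) : 2 * ncl s ≤ ncl r := by
  haveI : Finite (Quotient (Relation.EqvGen.setoid r)) := Quotient.finite _
  haveI : Finite (Quotient (Relation.EqvGen.setoid s)) := Quotient.finite _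
  set Qs := Quotient (Relation.EqvGen.setoid s) with hQs
  set Qr := Quotient (Relation.EqvGen.setoid r) with hQr
  set φ : Qr → Qs := Quotient.map' id (fun a b hab => eqvGen_mono' h1 a b hab) with hφ
  have φeq : ∀ v : V, φ (Quotient.mk _ v) = Quotient.mk _ v := fun v => rfl
  have key : Function.Injective (Sum.elim
      (fun q : Qs => (Quotient.mk _ q.out : Qr))
      (fun q : Qs => (Quotient.mk _ (b q.out) : Qr))) := by
    have hout : ∀ q : Qs, Quotient.mk (Relation.EqvGen.setoid s) (q.out) = q :=
      fun q => Quotient.out_eq q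
    have hφ1 : ∀ q : Qs, φ (Quotient.mk _ q.out) = q := fun q => (φeq q.out).trans (hout q)
    have hφ2 : ∀ q : Qs, φ (Quotient.mk _ (b q.out)) = q := by
      intro q
      rw [φeq (b q.out)]
      have h5 : Quotient.mk (Relation.EqvGen.setoid s) (b q.out) = Quotient.mk _ q.out :=
        Quotient.sound ((Relation.EqvGen.is_equivalence s).symm (h2 q.out))
      rw [h5, hout]
    rintro (q1 | q1) (q2 | q2) h
    · simp only [Sum.elim_inl] at h
      have h6 := congrArg φ h
      rw [hφ1, hφ1] at h6
      rw [h6]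
    · simp only [Sum.elim_inl, Sum.elim_inr] at h
      have heq := congrArg φ h
      rw [hφ1, hφ2] at heq
      rw [heq] at h
      exact absurd (Quotient.exact h) (h3 q2.out)
    · simp only [Sum.elim_inl, Sum.elim_inr] at h
      have heq := congrArg φ h
      rw [hφ2, hφ1] at heq
      rw [← heq] at h
      exact absurd ((Relation.EqvGen.is_equivalence r).symm (Quotient.exact h)) (h3 q1.out)
    · simp only [Sum.elim_inr] at h
      have h6 := congrArg φ h
      rw [hφ2, hφ2] at h6
      rw [h6]
  calc 2 * ncl s = Nat.card (Qs ⊕ Qs) := by rw [Nat.card_sum, two_mul]; rfl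
    _ ≤ Nat.card Qr := Nat.card_le_card_of_injective _ key
    _ = ncl r := rfl

variable {C : Type}

/-- the `c`-colored matching, as a permutation -/
def pinv (G : CGraph C V) (c : C) : Equiv.Perm V :=
  ⟨G.inv c, G.inv c, fun v => G.invol c v, fun v => G.invol c v⟩

@[simp] lemma pinv_apply (G : CGraph C V) (c : C) (v : V) : pinv G c v = G.inv c v := rfl

lemma pinv_mul_self (G : CGraph C V) (c : C) : pinv G c * pinv G c = 1 :=
  Equiv.ext fun v => G.invol c v

lemma pinv_inv (G : CGraph C V) (c : C) : (pinv G c)⁻¹ = pinv G c :=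
  inv_eq_of_mul_eq_one_right (pinv_mul_self G c)

lemma conj_invol {a τ : Equiv.Perm V} (ha : a * a = 1) (h1 : a * τ * a⁻¹ = τ⁻¹) :
    ∀ m : ℤ, a * τ ^ m * a⁻¹ = τ ^ (-m) := by
  intro m
  calc a * τ ^ m * a⁻¹ = (a * τ * a⁻¹) ^ m := by
        rw [show a * τ * a⁻¹ = (MulAut.conj a) τ from rfl, ← map_zpow]; rfl
    _ = (τ⁻¹) ^ m := by rw [h1]
    _ = τ ^ (-m) := by rw [zpow_neg, inv_zpow]

/-- parity: `G.inv c v` is never in the same cycle of `pinv c' * pinv c` as `v` -/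
lemma no_same_cycle (G : CGraph C V) (c c' : C) (v : V) :
    ¬ EqvGen (prel (pinv G c' * pinv G c)) v (G.inv c v) := by
  intro h
  set a := pinv G c' with ha
  set b := pinv G c with hb
  set τ := a * b with hτ
  obtain ⟨k, hk⟩ := eqvGen_prel_iff_zpow.mp h
  have hb2 : b * b = 1 := pinv_mul_self G c
  have ha2 : a * a = 1 := pinv_mul_self G c'
  have hbconj : ∀ m : ℤ, b * τ ^ m * b⁻¹ = τ ^ (-m) := by
    refine conj_invol hb2 ?_
    rw [hτ, mul_inv_rev, show b⁻¹ = b from inv_eq_of_mul_eq_one_right hb2,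
      show a⁻¹ = a from inv_eq_of_mul_eq_one_right ha2]
    calc b * (a * b) * b = b * a * (b * b) := by group
      _ = b * a := by rw [hb2, mul_one]
  have haconj : ∀ m : ℤ, a * τ ^ m * a⁻¹ = τ ^ (-m) := by
    refine conj_invol ha2 ?_
    rw [hτ, mul_inv_rev, show b⁻¹ = b from inv_eq_of_mul_eq_one_right hb2,
      show a⁻¹ = a from inv_eq_of_mul_eq_one_right ha2]
    calc a * (a * b) * a = (a * a) * (b * a) := by group
      _ = b * a := by rw [ha2, one_mul]
  have hbv : b v = (τ ^ k) v := by rw [hk]; rfl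
  have hbinv : b⁻¹ = b := inv_eq_of_mul_eq_one_right hb2
  have hainv : a⁻¹ = a := inv_eq_of_mul_eq_one_right ha2
  rcases Int.even_or_odd k with ⟨m, hm⟩ | ⟨m, hm⟩
  · have hfix : b ((τ ^ m) v) = (τ ^ m) v := by
      have h1 : b ((τ ^ m) v) = (b * τ ^ m * b⁻¹) (b v) := by
        simp only [Equiv.Perm.mul_apply, hbinv]
        have : b (b v) = v := by
          rw [← Equiv.Perm.mul_apply, hb2]; rfl
        rw [this]
      rw [h1, hbconj, hbv, ← Equiv.Perm.mul_apply, ← zpow_add]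
      have he : -m + k = m := by omega
      rw [he]
    exact G.no_fixed c ((τ ^ m) v) hfix
  · have hav : a v = (τ ^ (k+1)) v := by
      have h1 : a v = τ (b v) := by
        rw [hτ]
        simp only [Equiv.Perm.mul_apply]
        have hbb : b (b v) = v := by rw [← Equiv.Perm.mul_apply, hb2]; rfl
        rw [hbb]
      rw [h1, hbv, ← Equiv.Perm.mul_apply]
      congr 1
      rw [show (k:ℤ) + 1 = 1 + k by ring, zpow_add, zpow_one]
    have hfix : a ((τ ^ (m+1)) v) = (τ ^ (m+1)) v := by
      have h1 : a ((τ ^ (m+1)) v) = (a * τ ^ (m+1) * a⁻¹) (a v) := by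
        simp only [Equiv.Perm.mul_apply, hainv]
        have : a (a v) = v := by rw [← Equiv.Perm.mul_apply, ha2]; rfl
        rw [this]
      rw [h1, haconj, hav, ← Equiv.Perm.mul_apply, ← zpow_add]
      have he : -(m+1) + (k+1) = m+1 := by omega
      rw [he]
    exact G.no_fixed c' ((τ ^ (m+1)) v) hfix

/-- each `{c,c'}`-colored component splits into at least 2 cycles of `pinv c' * pinv c` -/
lemma two_mul_g_le_cyc (G : CGraph C V) (c c' : C) :
    2 * G.g {c, c'} ≤ cyc (pinv G c' * pinv G c) := by
  have hg : G.g {c, c'} = ncl (fun v w => ∃ cc ∈ ({c, c'} : Set C), G.inv cc v = w) := rfl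
  rw [hg]
  refine two_ncl_le (G.inv c) ?_ ?_ ?_
  · rintro v w rfl
    have h1 : EqvGen (fun v w => ∃ cc ∈ ({c, c'} : Set C), G.inv cc v = w) v (G.inv c v) :=
      EqvGen.rel _ _ ⟨c, Or.inl rfl, rfl⟩
    have h2 : EqvGen (fun v w => ∃ cc ∈ ({c, c'} : Set C), G.inv cc v = w)
        (G.inv c v) (G.inv c' (G.inv c v)) := EqvGen.rel _ _ ⟨c', Or.inr rfl, rfl⟩
    exact EqvGen.trans _ _ _ h1 h2
  · intro v
    exact EqvGen.rel _ _ ⟨c, Or.inl rfl, rfl⟩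
  · intro v
    exact no_same_cycle G c c' v

/-- a fixed-point-free involution forces even cardinality -/
lemma even_nat_card_of_cgraph (G : CGraph C V) (c : C) : Even (Nat.card V) := by
  classical
  letI : Fintype V := Fintype.ofFinite V
  set s : Setoid V := Relation.EqvGen.setoid (fun v w => G.inv c v = w) with hs
  have hchar : ∀ u w : V, EqvGen (fun v w => G.inv c v = w) u w ↔ (w = u ∨ w = G.inv c u) := by
    intro u w
    constructor
    · have hequiv : Equivalence (fun u w : V => w = u ∨ w = G.inv c u) := by
        constructor
        · intro x; exact Or.inl rfl
        · intro x y hxy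
          rcases hxy with rfl | h
          · exact Or.inl rfl
          · exact Or.inr (by rw [h, G.invol])
        · intro x y z hxy hyz
          rcases hxy with rfl | h
          · exact hyz
          · rcases hyz with rfl | h'
            · exact Or.inr h
            · rw [h] at h'
              rw [G.invol] at h'
              exact Or.inl h'
      exact eqvGen_le hequiv (fun a b h => Or.inr h.symm) u w
    · rintro (rfl | rfl)
      · exact EqvGen.refl _
      · exact EqvGen.rel _ _ rfl
  letI : DecidableEq (Quotient s) := Classical.decEq _
  letI : Fintype (Quotient s) := Fintype.ofFinite _
  have hcard : (Finset.univ : Finset V).card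
      = ∑ q : Quotient s, (Finset.univ.filter (fun v => (Quotient.mk s v) = q)).card := by
    rw [← Finset.card_eq_sum_card_fiberwise (fun v _ => Finset.mem_univ (Quotient.mk s v))]
  have hfib : ∀ q : Quotient s, (Finset.univ.filter (fun v => (Quotient.mk s v) = q)).card = 2 := by
    intro q
    have hset : Finset.univ.filter (fun v => (Quotient.mk s v) = q)
        = {q.out, G.inv c q.out} := by
      ext u
      simp only [Finset.mem_filter, Finset.mem_univ, true_and, Finset.mem_insert,
        Finset.mem_singleton]
      constructor
      · intro h
        have h2 : EqvGen (fun v w => G.inv c v = w) u q.out := by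
          have := h.trans (Quotient.out_eq q).symm
          exact Quotient.exact this
        rcases (hchar u q.out).mp h2 with h3 | h3
        · exact Or.inl h3.symm
        · refine Or.inr ?_
          rw [h3, G.invol]
      · intro h
        refine Eq.trans ?_ (Quotient.out_eq q)
        refine Quotient.sound ?_
        refine (hchar u q.out).mpr ?_
        rcases h with rfl | rfl
        · exact Or.inl rfl
        · refine Or.inr ?_
          rw [G.invol]
    rw [hset]
    rw [Finset.card_insert_of_notMem (by
      simp only [Finset.mem_singleton]
      exact fun h => G.no_fixed c q.out h.symm), Finset.card_singleton]
  have : Nat.card V = 2 * Fintype.card (Quotient s) := by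
    rw [Nat.card_eq_fintype_card, Fintype.card, hcard]
    rw [Finset.sum_congr rfl (fun q _ => hfib q)]
    rw [Finset.sum_const, Finset.card_univ, smul_eq_mul, mul_comm]
  exact ⟨Fintype.card (Quotient s), by omega⟩

end GRAPH

section CYCLIC

open Relation Equiv CGraph

variable {V : Type} [Finite V] [DecidableEq V] {d : ℕ}

lemma orderOf_cyclic {n : ℕ} {σ : Equiv.Perm (Fin n)} (hσ : IsCyclicPerm σ) :
    orderOf σ = n := by
  classical
  have hsupp : σ.support = Finset.univ :=
    Finset.eq_univ_iff_forall.mpr (fun c => Equiv.Perm.mem_support.mpr (hσ.2 c))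
  rw [hσ.1.orderOf, hsupp, Finset.card_univ, Fintype.card_fin]

lemma pow_orbit_ne {σ : Equiv.Perm (Fin (d+1))} (hσ : IsCyclicPerm σ) {j k : ℕ}
    (hj : j < k) (hk : k < d+1) : (σ ^ j) 0 ≠ (σ ^ k) 0 := by
  intro heq
  have h1 : (σ ^ (k-j)) ((σ ^ j) 0) = (σ ^ j) 0 := by
    rw [← Equiv.Perm.mul_apply, ← pow_add]
    rw [show k - j + j = k from by omega]
    exact heq.symm
  have h2 : σ ^ (k-j) = 1 := (hσ.1.pow_eq_one_iff' (hσ.2 _)).mpr h1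
  have h3 : orderOf σ ∣ (k-j) := orderOf_dvd_of_pow_eq_one h2
  rw [orderOf_cyclic hσ] at h3
  have := Nat.le_of_dvd (by omega) h3
  omega

lemma orbit_bijective {σ : Equiv.Perm (Fin (d+1))} (hσ : IsCyclicPerm σ) :
    Function.Bijective (fun j : Fin (d+1) => (σ ^ (j:ℕ)) 0) := by
  rw [← Finite.injective_iff_bijective]
  intro j k heq
  rcases lt_trichotomy (j:ℕ) (k:ℕ) with h | h | h
  · exact absurd heq (pow_orbit_ne hσ h k.isLt)
  · exact Fin.ext h
  · exact absurd heq.symm (pow_orbit_ne hσ h j.isLt)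

lemma orbit_surj {σ : Equiv.Perm (Fin (d+1))} (hσ : IsCyclicPerm σ) :
    ∀ c : Fin (d+1), ∃ j, j < d+1 ∧ (σ ^ j) 0 = c := by
  intro c
  obtain ⟨j, hj⟩ := (orbit_bijective hσ).2 c
  exact ⟨(j:ℕ), j.isLt, hj⟩

/-- the list of consecutive double matchings associated with a cyclic permutation of colors -/
def tauG (G : CGraph (Fin (d+1)) V) (σ : Equiv.Perm (Fin (d+1))) (j : ℕ) : Equiv.Perm V :=
  pinv G ((σ ^ (j+1)) 0) * pinv G ((σ ^ j) 0)

def cycList (G : CGraph (Fin (d+1)) V) (σ : Equiv.Perm (Fin (d+1))) : List (Equiv.Perm V) :=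
  ((List.range (d+1)).map (tauG G σ)).reverse

lemma mem_cycList {G : CGraph (Fin (d+1)) V} {σ : Equiv.Perm (Fin (d+1))} {π : Equiv.Perm V} :
    π ∈ cycList G σ ↔ ∃ j, j < d+1 ∧ π = tauG G σ j := by
  rw [cycList, List.mem_reverse, List.mem_map]
  constructor
  · rintro ⟨j, hj, rfl⟩
    exact ⟨j, List.mem_range.mp hj, rfl⟩
  · rintro ⟨j, hj, rfl⟩
    exact ⟨j, List.mem_range.mpr hj, rfl⟩

lemma length_cycList (G : CGraph (Fin (d+1)) V) (σ : Equiv.Perm (Fin (d+1))) :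
    (cycList G σ).length = d+1 := by
  rw [cycList, List.length_reverse, List.length_map, List.length_range]

lemma prod_cycList (G : CGraph (Fin (d+1)) V) {σ : Equiv.Perm (Fin (d+1))}
    (hσ1 : σ ^ (d+1) = 1) : (cycList G σ).prod = 1 := by
  have key : ∀ k, ((List.range k).map (tauG G σ)).reverse.prod
      = pinv G ((σ ^ k) 0) * pinv G ((σ ^ (0:ℕ)) 0) := by
    intro k
    induction k with
    | zero =>
      simp only [List.range_zero, List.map_nil, List.reverse_nil, List.prod_nil, pow_zero]
      exact (pinv_mul_self G _).symm
    | succ k ih =>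
      rw [List.range_succ, List.map_append, List.reverse_append]
      simp only [List.map_cons, List.map_nil, List.reverse_cons, List.reverse_nil,
        List.nil_append, List.singleton_append]
      rw [List.prod_cons, ih, tauG]
      rw [mul_assoc (pinv G ((σ ^ (k+1)) 0)), ← mul_assoc (pinv G ((σ ^ k) 0)),
        pinv_mul_self, one_mul]
  rw [cycList, key (d+1), hσ1, pow_zero]
  exact pinv_mul_self G _

lemma conn_rel_total (G : CGraph (Fin (d+1)) V) (hconn : G.Conn) :
    ∀ v w : V, EqvGen (fun v w => ∃ c ∈ (Set.univ : Set (Fin (d+1))), G.inv c v = w) v w := by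
  intro v w
  obtain ⟨hsub, -⟩ := Nat.card_eq_one_iff_unique.mp hconn
  haveI := hsub
  exact Quotient.exact (Subsingleton.elim
    (Quotient.mk (Relation.EqvGen.setoid _) v) (Quotient.mk _ w))

lemma nonempty_of_conn (G : CGraph (Fin (d+1)) V) (hconn : G.Conn) : Nonempty V := by
  obtain ⟨-, ⟨q⟩⟩ := Nat.card_eq_one_iff_unique.mp hconn
  exact ⟨q.out⟩

lemma R_total (G : CGraph (Fin (d+1)) V) (hconn : G.Conn) (hnb : ¬ G.Bipartite)
    (σ : Equiv.Perm (Fin (d+1))) (hσ : IsCyclicPerm σ) :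
    ∀ v w : V, EqvGen (lrel (cycList G σ)) v w := by
  classical
  set R := EqvGen (lrel (cycList G σ)) with hR
  have ER := Relation.EqvGen.is_equivalence (lrel (cycList G σ))
  have hsurjc := orbit_surj hσ
  have hmove : ∀ j, j < d+1 → ∀ w : V,
      R w (G.inv ((σ ^ (j+1)) 0) (G.inv ((σ ^ j) 0) w)) := by
    intro j hj w
    exact EqvGen.rel _ _ ⟨tauG G σ j, mem_cycList.mpr ⟨j, hj, rfl⟩, rfl⟩
  have T1 : ∀ j, j ≤ d+1 → ∀ v : V,
      R v (G.inv ((σ ^ j) 0) (G.inv ((σ ^ (0:ℕ)) 0) v)) := by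
    intro j
    induction j with
    | zero =>
      intro _ v
      have h0 : G.inv ((σ ^ (0:ℕ)) 0) (G.inv ((σ ^ (0:ℕ)) 0) v) = v := G.invol _ v
      rw [h0]
      exact ER.refl v
    | succ j ih =>
      intro hj v
      have h1 := ih (by omega) v
      have h2 := hmove j (by omega) (G.inv ((σ ^ j) 0) (G.inv ((σ ^ (0:ℕ)) 0) v))
      rw [G.invol] at h2
      exact ER.trans h1 h2
  have T2 : ∀ (c1 c2 : Fin (d+1)) (v : V), R v (G.inv c1 (G.inv c2 v)) := by
    intro c1 c2 v
    obtain ⟨j1, hj1, rfl⟩ := hsurjc c1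
    obtain ⟨j2, hj2, rfl⟩ := hsurjc c2
    have h1 : R (G.inv ((σ ^ (0:ℕ)) 0) (G.inv ((σ ^ j2) 0) v)) v := by
      have h := T1 j2 (by omega) (G.inv ((σ ^ (0:ℕ)) 0) (G.inv ((σ ^ j2) 0) v))
      rw [G.invol, G.invol] at h
      exact h
    have h2 := T1 j1 (by omega) (G.inv ((σ ^ (0:ℕ)) 0) (G.inv ((σ ^ j2) 0) v))
    rw [G.invol] at h2
    exact ER.trans (ER.symm h1) h2
  have T3 : ∀ w u : V, R w u →
      R (G.inv ((σ ^ (0:ℕ)) 0) w) (G.inv ((σ ^ (0:ℕ)) 0) u) := by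
    intro w u h
    induction h with
    | rel a b hab =>
      obtain ⟨π, hπ, hπab⟩ := hab
      obtain ⟨j, hj, rfl⟩ := mem_cycList.mp hπ
      have hb : b = G.inv ((σ ^ (j+1)) 0) (G.inv ((σ ^ j) 0) a) := hπab.symm
      have s1 := T2 ((σ ^ j) 0) ((σ ^ (0:ℕ)) 0) (G.inv ((σ ^ (0:ℕ)) 0) a)
      rw [G.invol] at s1
      have s2 := T2 ((σ ^ (0:ℕ)) 0) ((σ ^ (j+1)) 0) (G.inv ((σ ^ j) 0) a)
      rw [hb]
      exact ER.trans s1 (by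
        have : R (G.inv ((σ ^ j) 0) a)
            (G.inv ((σ ^ (0:ℕ)) 0) (G.inv ((σ ^ (j+1)) 0) (G.inv ((σ ^ j) 0) a))) := by
          have h4 := T2 ((σ ^ (0:ℕ)) 0) ((σ ^ (j+1)) 0) (G.inv ((σ ^ j) 0) a)
          exact h4
        exact this)
    | refl a => exact ER.refl _
    | symm a b _ ih => exact ER.symm ih
    | trans a b c _ _ ih1 ih2 => exact ER.trans ih1 ih2
  have T4 : ∀ v w : V,
      EqvGen (fun v w => ∃ c ∈ (Set.univ : Set (Fin (d+1))), G.inv c v = w) v w →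
      (R v w ∨ R v (G.inv ((σ ^ (0:ℕ)) 0) w)) := by
    intro v w h
    induction h with
    | rel a b hab =>
      obtain ⟨c, -, rfl⟩ := hab
      exact Or.inr (T2 _ c a)
    | refl a => exact Or.inl (ER.refl a)
    | symm a b _ ih =>
      rcases ih with h1 | h1
      · exact Or.inl (ER.symm h1)
      · refine Or.inr ?_
        have h3 := T3 _ _ h1
        rw [G.invol] at h3
        exact ER.symm h3
    | trans a b c _ _ ih1 ih2 =>
      rcases ih1 with h1 | h1 <;> rcases ih2 with h2 | h2
      · exact Or.inl (ER.trans h1 h2)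
      · exact Or.inr (ER.trans h1 h2)
      · refine Or.inr ?_
        exact ER.trans h1 (T3 _ _ h2)
      · refine Or.inl ?_
        have h3 := T3 _ _ h2
        rw [G.invol] at h3
        exact ER.trans h1 h3
  have TotOdd : ∀ (v : V) (cc : Fin (d+1)), R v (G.inv cc v) → ∀ u w : V, R u w := by
    intro v cc hodd
    have hv0 : R v (G.inv ((σ ^ (0:ℕ)) 0) v) := by
      have h1 := T2 ((σ ^ (0:ℕ)) 0) cc (G.inv cc v)
      rw [G.invol] at h1
      exact ER.trans hodd h1
    have hall : ∀ u, R v u := by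
      intro u
      rcases T4 v u (conn_rel_total G hconn v u) with h | h
      · exact h
      · have h3 := T3 _ _ h
        rw [G.invol] at h3
        exact ER.trans hv0 h3
    intro u w
    exact ER.trans (ER.symm (hall u)) (hall w)
  by_contra hnR
  push_neg at hnR
  obtain ⟨v₁, w₁, hR1⟩ := hnR
  refine hnb ⟨fun u => if R v₁ u then true else false, ?_⟩
  intro cc v
  by_cases hv : R v₁ v
  · have hni : ¬ R v₁ (G.inv cc v) := by
      intro h2
      exact hR1 (TotOdd v cc (ER.trans (ER.symm hv) h2) v₁ w₁)
    simp [hv, hni]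
  · have hyes : R v₁ (G.inv cc v) := by
      rcases T4 v₁ v (conn_rel_total G hconn v₁ v) with h | h
      · exact absurd h hv
      · have h3 := T2 cc ((σ ^ (0:ℕ)) 0) (G.inv ((σ ^ (0:ℕ)) 0) v)
        rw [G.invol] at h3
        exact ER.trans h h3
    simp [hv, hyes]

lemma ncl_cycList (G : CGraph (Fin (d+1)) V) (hconn : G.Conn) (hnb : ¬ G.Bipartite)
    (σ : Equiv.Perm (Fin (d+1))) (hσ : IsCyclicPerm σ) :
    ncl (lrel (cycList G σ)) = 1 := by
  have htot := R_total G hconn hnb σ hσ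
  refine Nat.card_eq_one_iff_unique.mpr ⟨⟨?_⟩, ?_⟩
  · intro q1 q2
    refine Quotient.ind₂ (fun a b => ?_) q1 q2
    exact Quotient.sound (htot a b)
  · obtain ⟨v⟩ := nonempty_of_conn G hconn
    exact ⟨Quotient.mk _ v⟩

lemma list_range_sum (f : ℕ → ℕ) (n : ℕ) :
    ((List.range n).map f).sum = ∑ j ∈ Finset.range n, f j := by
  induction n with
  | zero => simp
  | succ k ih =>
    rw [List.range_succ, List.map_append, List.sum_append, Finset.sum_range_succ, ih]
    simp

/-- the master inequality for a single cyclic permutation of the colors -/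
lemma chi_sum_bound (G : CGraph (Fin (d+1)) V) (hconn : G.Conn) (hnb : ¬ G.Bipartite)
    (σ : Equiv.Perm (Fin (d+1))) (hσ : IsCyclicPerm σ) :
    2 * (∑ c : Fin (d+1), G.g {c, σ c}) + 2 * Nat.card V ≤ (d + 1) * Nat.card V + 2 := by
  classical
  have hσ1 : σ ^ (d+1) = 1 := by
    have h := pow_orderOf_eq_one σ
    rwa [orderOf_cyclic hσ] at h
  have hmain := main_perm (cycList G σ) (prod_cycList G hσ1)
  rw [length_cycList, ncl_cycList G hconn hnb σ hσ] at hmain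
  have hsumlist : ((cycList G σ).map cyc).sum
      = ∑ j ∈ Finset.range (d+1), cyc (tauG G σ j) := by
    rw [cycList, List.map_reverse, List.sum_reverse, List.map_map]
    exact list_range_sum _ _
  have hreindex : ∑ c : Fin (d+1), G.g {c, σ c}
      = ∑ j ∈ Finset.range (d+1), G.g {(σ ^ j) 0, (σ ^ (j+1)) 0} := by
    rw [← Fin.sum_univ_eq_sum_range (fun j => G.g {(σ ^ j) 0, (σ ^ (j+1)) 0}) (d+1)]
    refine Eq.symm (Fintype.sum_bijective (fun j : Fin (d+1) => (σ ^ (j:ℕ)) 0)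
      (orbit_bijective hσ)
      (fun j : Fin (d+1) => G.g {(σ ^ (j:ℕ)) 0, (σ ^ ((j:ℕ)+1)) 0})
      (fun c => G.g {c, σ c}) ?_)
    intro j
    have h5 : (σ ^ ((j:ℕ)+1)) 0 = σ ((σ ^ (j:ℕ)) 0) := by rw [pow_succ']; rfl
    rw [h5]
  have hperj : ∀ j ∈ Finset.range (d+1),
      2 * G.g {(σ ^ j) 0, (σ ^ (j+1)) 0} ≤ cyc (tauG G σ j) := by
    intro j _
    exact two_mul_g_le_cyc G ((σ ^ j) 0) ((σ ^ (j+1)) 0)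
  have hsum2 : 2 * (∑ j ∈ Finset.range (d+1), G.g {(σ ^ j) 0, (σ ^ (j+1)) 0})
      ≤ ∑ j ∈ Finset.range (d+1), cyc (tauG G σ j) := by
    rw [Finset.mul_sum]
    exact Finset.sum_le_sum hperj
  rw [hreindex]
  rw [hsumlist] at hmain
  omega

end CYCLIC

section COUNT

open Equiv Equiv.Perm CGraph

variable {d : ℕ}

def extPerm (π : Equiv.Perm (Fin d)) : Equiv.Perm (Fin (d+1)) :=
  (finSuccEquivLast.symm.permCongr) (Equiv.optionCongr π)

lemma extPerm_castSucc (π : Equiv.Perm (Fin d)) (i : Fin d) :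
    extPerm π (Fin.castSucc i) = Fin.castSucc (π i) := by
  rw [extPerm, Equiv.permCongr_apply]
  simp

lemma extPerm_last (π : Equiv.Perm (Fin d)) : extPerm π (Fin.last d) = Fin.last d := by
  rw [extPerm, Equiv.permCongr_apply]
  simp

lemma extPerm_injective : Function.Injective (extPerm (d := d)) := by
  intro π1 π2 h
  refine Equiv.ext (fun i => ?_)
  have h2 := congrArg (fun (e : Equiv.Perm (Fin (d+1))) => e (Fin.castSucc i)) h
  simp only [extPerm_castSucc] at h2
  exact Fin.castSucc_injective d h2

def PhiP (π : Equiv.Perm (Fin d)) : Equiv.Perm (Fin (d+1)) :=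
  extPerm π * finRotate (d+1) * (extPerm π)⁻¹

lemma finRotate_ne {e : ℕ} (i : Fin (e+2)) : finRotate (e+2) i ≠ i := by
  rw [finRotate_succ_apply]
  intro h
  have h2 : (1 : Fin (e+2)) = 0 := by
    rw [← add_sub_cancel_left i 1, h, sub_self]
  have h3 := Fin.one_eq_zero_iff.mp h2
  omega

lemma PhiP_cyclic (hd : 1 ≤ d) (π : Equiv.Perm (Fin d)) : IsCyclicPerm (PhiP π) := by
  obtain ⟨e, rfl⟩ : ∃ e, d = e + 1 := ⟨d - 1, by omega⟩
  constructor
  · exact (isCycle_finRotate (n := e)).conj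
  · intro c hc
    rw [PhiP] at hc
    simp only [Equiv.Perm.mul_apply] at hc
    have h2 : finRotate (e+1+1) ((extPerm π)⁻¹ c) = (extPerm π)⁻¹ c := by
      have := congrArg ((extPerm π)⁻¹ : Equiv.Perm (Fin (e+2))) hc
      simpa using this
    exact finRotate_ne _ h2

lemma PhiP_injective (hd : 1 ≤ d) : Function.Injective (PhiP (d := d)) := by
  obtain ⟨e, rfl⟩ : ∃ e, d = e + 1 := ⟨d - 1, by omega⟩
  intro π1 π2 h
  have happ : ∀ (π : Equiv.Perm (Fin (e+1))) (y : Fin (e+2)),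
      PhiP π (extPerm π y) = extPerm π (finRotate (e+2) y) := by
    intro π y
    rw [PhiP]
    simp [Equiv.Perm.mul_apply]
  have key : ∀ k : ℕ, extPerm π1 (((finRotate (e+2)) ^ k) (Fin.last (e+1)))
      = extPerm π2 (((finRotate (e+2)) ^ k) (Fin.last (e+1))) := by
    intro k
    induction k with
    | zero =>
      simp only [pow_zero, Equiv.Perm.one_apply]
      rw [extPerm_last, extPerm_last]
    | succ k ih =>
      have hp : ((finRotate (e+2)) ^ (k+1)) (Fin.last (e+1))
          = finRotate (e+2) (((finRotate (e+2)) ^ k) (Fin.last (e+1))) := by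
        rw [pow_succ']; rfl
      rw [hp, ← happ π1, ← happ π2, ih, h]
  have hy : ∀ y : Fin (e+2), extPerm π1 y = extPerm π2 y := by
    intro y
    obtain ⟨k, hk⟩ := (isCycle_finRotate (n := e)).exists_pow_eq
      (finRotate_ne (Fin.last (e+1))) (finRotate_ne y)
    rw [← hk]
    exact key k
  exact extPerm_injective (Equiv.ext hy)

lemma card_cyclic_ge (hd : 1 ≤ d) :
    d.factorial ≤ Nat.card {σ : Equiv.Perm (Fin (d+1)) // IsCyclicPerm σ} := by
  classical
  have hinj : Function.Injective
      (fun π : Equiv.Perm (Fin d) =>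
        (⟨PhiP π, PhiP_cyclic hd π⟩ : {σ : Equiv.Perm (Fin (d+1)) // IsCyclicPerm σ})) := by
    intro π1 π2 h
    exact PhiP_injective hd (congrArg Subtype.val h)
  have h2 := Nat.card_le_card_of_injective _ hinj
  rwa [Nat.card_eq_fintype_card (α := Equiv.Perm (Fin d)), Fintype.card_perm,
    Fintype.card_fin] at h2

instance isCycleDec {n : ℕ} (σ : Equiv.Perm (Fin n)) : Decidable σ.IsCycle :=
  decidable_of_iff (∃ x, σ x ≠ x ∧ ∀ y, σ y ≠ y → σ.SameCycle x y) Iff.rfl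

instance isCyclicPermDec {n : ℕ} (σ : Equiv.Perm (Fin n)) : Decidable (IsCyclicPerm σ) :=
  decidable_of_iff (σ.IsCycle ∧ ∀ c, σ c ≠ c) Iff.rfl

set_option maxRecDepth 100000 in
lemma count6 : (Finset.univ.filter
    (fun σ : Equiv.Perm (Fin 4) => IsCyclicPerm σ)).card = 6 := by decide

set_option maxRecDepth 100000 in
lemma countA : ∀ c jj : Fin 4, ((Finset.univ.filter
    (fun σ : Equiv.Perm (Fin 4) => IsCyclicPerm σ)).filter
      (fun σ => σ c = jj)).card = if c = jj then 0 else 2 := by decide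

end COUNT

section FINAL

open CGraph Equiv

lemma chi_eq {V : Type} [Finite V] {d : ℕ} (G : CGraph (Fin (d+1)) V)
    (σ : Equiv.Perm (Fin (d+1))) :
    G.chi σ = ((∑ c : Fin (d+1), G.g {c, σ c} : ℕ) : ℚ)
      + (2 - ((d:ℚ)+1)) * ((Nat.card V : ℚ)/2) := by
  rw [CGraph.chi, finsum_eq_sum_of_fintype]
  rw [Nat.card_eq_fintype_card (α := Fin (d+1)), Fintype.card_fin]
  push_cast
  ring

lemma rho_ge_half {V : Type} [Finite V] [DecidableEq V] {d : ℕ} (G : CGraph (Fin (d+1)) V)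
    (hconn : G.Conn) (hnb : ¬ G.Bipartite) (σ : Equiv.Perm (Fin (d+1)))
    (hσ : IsCyclicPerm σ) : (1/2 : ℚ) ≤ G.rho σ := by
  have hch := chi_sum_bound G hconn hnb σ hσ
  have hchq : G.chi σ ≤ 1 := by
    rw [chi_eq]
    have hcast : 2 * ((∑ c : Fin (d+1), G.g {c, σ c} : ℕ) : ℚ) + 2 * (Nat.card V : ℚ)
        ≤ ((d:ℚ)+1) * (Nat.card V : ℚ) + 2 := by
      exact_mod_cast hch
    linarith
  rw [CGraph.rho, hconn]
  push_cast
  linarith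

lemma stmt1_d3 {V : Type} [Finite V] [DecidableEq V] (G : CGraph (Fin (3+1)) V)
    (hconn : G.Conn) (hnb : ¬ G.Bipartite) : (2:ℚ) ≤ G.omegaG := by
  classical
  set m := Nat.card V with hm
  have hmeven : Even m := even_nat_card_of_cgraph G 0
  set F : Finset (Equiv.Perm (Fin 4)) := Finset.univ.filter (fun σ => IsCyclicPerm σ) with hF
  have hFcard : F.card = 6 := count6
  have hFmem : ∀ σ : Equiv.Perm (Fin 4), σ ∈ F ↔ IsCyclicPerm σ := by
    intro σ
    rw [hF, Finset.mem_filter]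
    simp
  -- per-σ bound
  have hS : ∀ σ ∈ F, (∑ c : Fin 4, G.g {c, σ c}) ≤ m + 1 := by
    intro σ hσF
    have hσ : IsCyclicPerm σ := (hFmem σ).mp hσF
    have h := chi_sum_bound G hconn hnb σ hσ
    have h' : 2 * (∑ c : Fin 4, G.g {c, σ c}) + 2 * Nat.card V
        ≤ (3 + 1) * Nat.card V + 2 := h
    omega
  -- double counting
  set S2 : ℕ := ∑ c : Fin 4, ∑ jj : Fin 4, (if c = jj then 0 else G.g {c, jj}) with hS2def
  have hsumS : (∑ σ ∈ F, ∑ c : Fin 4, G.g {c, σ c}) = 2 * S2 := by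
    rw [Finset.sum_comm, hS2def, Finset.mul_sum]
    refine Finset.sum_congr rfl (fun c _ => ?_)
    rw [← Finset.sum_fiberwise_of_maps_to (g := fun σ : Equiv.Perm (Fin 4) => σ c)
      (t := Finset.univ) (fun σ _ => Finset.mem_univ _) (fun σ => G.g {c, σ c})]
    rw [Finset.mul_sum]
    refine Finset.sum_congr rfl (fun jj _ => ?_)
    have hcong : ∀ σ ∈ F.filter (fun σ => σ c = jj), G.g {c, σ c} = G.g {c, jj} := by
      intro σ hσ
      rw [(Finset.mem_filter.mp hσ).2]
    rw [Finset.sum_congr rfl hcong, Finset.sum_const, smul_eq_mul]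
    have hcc : (F.filter (fun σ => σ c = jj)).card = if c = jj then 0 else 2 := by
      rw [hF]
      exact countA c jj
    rw [hcc]
    by_cases h : c = jj
    · simp [h]
    · simp [h]
  -- evenness of S2
  have hgsym : ∀ c jj : Fin 4, G.g {c, jj} = G.g {jj, c} := by
    intro c jj
    rw [Set.pair_comm]
  have hS2split : S2 = (∑ c : Fin 4, ∑ jj : Fin 4, (if c < jj then G.g {c, jj} else 0))
      + (∑ c : Fin 4, ∑ jj : Fin 4, (if jj < c then G.g {c, jj} else 0)) := by
    rw [hS2def, ← Finset.sum_add_distrib]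
    refine Finset.sum_congr rfl (fun c _ => ?_)
    rw [← Finset.sum_add_distrib]
    refine Finset.sum_congr rfl (fun jj _ => ?_)
    rcases lt_trichotomy c jj with h | h | h
    · rw [if_neg (ne_of_lt h), if_pos h, if_neg (asymm h), add_zero]
    · rw [if_pos h, if_neg (by rw [h]; exact lt_irrefl jj), if_neg (by rw [h]; exact lt_irrefl jj)]
    · rw [if_neg (Ne.symm (ne_of_lt h)), if_neg (asymm h), if_pos h, zero_add]
  have hTT : (∑ c : Fin 4, ∑ jj : Fin 4, (if jj < c then G.g {c, jj} else 0))
      = (∑ c : Fin 4, ∑ jj : Fin 4, (if c < jj then G.g {c, jj} else 0)) := by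
    rw [Finset.sum_comm]
    refine Finset.sum_congr rfl (fun jj _ => Finset.sum_congr rfl (fun c _ => ?_))
    by_cases h : jj < c
    · rw [if_pos h, if_pos h, hgsym]
    · rw [if_neg h, if_neg h]
  have hS2even : Even S2 := by
    rw [hS2split, hTT]
    exact ⟨_, rfl⟩
  -- upper bound on S2
  have hS2le : S2 ≤ 3*m + 2 := by
    have h1 : 2 * S2 ≤ 6 * (m+1) := by
      rw [← hsumS]
      calc ∑ σ ∈ F, ∑ c : Fin 4, G.g {c, σ c} ≤ ∑ _σ ∈ F, (m+1) := Finset.sum_le_sum hS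
        _ = 6 * (m+1) := by rw [Finset.sum_const, hFcard, smul_eq_mul]
    obtain ⟨m2, hm2⟩ := hmeven
    obtain ⟨s2', hs2'⟩ := hS2even
    omega
  -- χ values
  have hchi : ∀ σ ∈ F, G.chi σ = ((∑ c : Fin 4, G.g {c, σ c} : ℕ) : ℚ) - m := by
    intro σ _
    rw [chi_eq]
    push_cast
    ring
  -- ω
  letI : Fintype {σ : Equiv.Perm (Fin 4) // IsCyclicPerm σ} := Subtype.fintype _
  rw [CGraph.omegaG, finsum_eq_sum_of_fintype,
    ← Finset.sum_subtype F hFmem (fun σ => G.rho σ)]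
  have hrhoeq : ∀ σ ∈ F, G.rho σ = (2 - G.chi σ)/2 := by
    intro σ _
    rw [CGraph.rho, hconn]
    norm_num
  rw [Finset.sum_congr rfl hrhoeq]
  have hsumchi : ∑ σ ∈ F, G.chi σ = ((2 * S2 : ℕ) : ℚ) - 6 * m := by
    rw [Finset.sum_congr rfl hchi, Finset.sum_sub_distrib, ← Nat.cast_sum, hsumS,
      Finset.sum_const, hFcard]
    push_cast
    ring
  have hsum2 : ∑ σ ∈ F, (2 - G.chi σ)/2 = (∑ σ ∈ F, (2 - G.chi σ))/2 := by
    rw [Finset.sum_div]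
  rw [hsum2, Finset.sum_sub_distrib, hsumchi, Finset.sum_const, hFcard]
  have hcast : (S2 : ℚ) ≤ 3 * (m:ℚ) + 2 := by exact_mod_cast hS2le
  simp only [nsmul_eq_mul]
  push_cast
  linarith

open CGraph in
/-- Proposition `G-degree non-bipartite`: for `d ≥ 3`, every non-bipartite
`(d+1)`-colored graph satisfies `ω_G(Γ) ≥ ⌈d!/4⌉`. -/
theorem stmt1 {d : ℕ} (hd : 3 ≤ d) {V : Type} [Finite V]
    (G : CGraph (Fin (d + 1)) V) (hconn : G.Conn) (hnb : ¬ G.Bipartite) :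
    ((⌈(d.factorial : ℚ) / 4⌉ : ℤ) : ℚ) ≤ G.omegaG := by
  classical
  rcases eq_or_lt_of_le hd with hd3 | hd4
  · -- d = 3
    subst hd3
    have h6 : ((3:ℕ).factorial : ℚ) = 6 := by norm_num [Nat.factorial]
    rw [h6]
    have hceil : (⌈(6:ℚ)/4⌉ : ℤ) = 2 := by
      rw [Int.ceil_eq_iff] <;> norm_num
    rw [hceil]
    exact_mod_cast stmt1_d3 G hconn hnb
  · -- d ≥ 4
    have hd1 : 1 ≤ d := by omega
    letI : Fintype {σ : Equiv.Perm (Fin (d+1)) // IsCyclicPerm σ} := Fintype.ofFinite _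
    rw [CGraph.omegaG, finsum_eq_sum_of_fintype]
    have hsum : (Fintype.card {σ : Equiv.Perm (Fin (d+1)) // IsCyclicPerm σ} : ℚ) * (1/2)
        ≤ ∑ σ : {σ : Equiv.Perm (Fin (d+1)) // IsCyclicPerm σ}, G.rho σ.val := by
      have h := Finset.card_nsmul_le_sum Finset.univ
        (fun σ : {σ : Equiv.Perm (Fin (d+1)) // IsCyclicPerm σ} => G.rho σ.val)
        (1/2 : ℚ) (fun σ _ => rho_ge_half G hconn hnb σ.val σ.2)
      rwa [nsmul_eq_mul, Finset.card_univ] at h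
    have hcard : (d.factorial : ℚ)
        ≤ (Fintype.card {σ : Equiv.Perm (Fin (d+1)) // IsCyclicPerm σ} : ℚ) := by
      have h := card_cyclic_ge (d := d) hd1
      rw [Nat.card_eq_fintype_card] at h
      exact_mod_cast h
    have hdvd : 4 ∣ d.factorial := Nat.dvd_factorial (by norm_num) (by omega)
    have hq : ((d.factorial / 4 : ℕ) : ℚ) = (d.factorial : ℚ)/4 :=
      Nat.cast_div hdvd (by norm_num)
    have hceil : (⌈(d.factorial : ℚ)/4⌉ : ℤ) = ((d.factorial / 4 : ℕ) : ℤ) := by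
      rw [← hq, Int.ceil_natCast]
    rw [hceil, Int.cast_natCast, hq]
    linarith

end FINAL
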